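/- The equation u'' + [u² + (u + u')² − 1]·u' + u = 0 has at least one non-constant periodic solution: there exist a twice continuously differentiable function u₀ : ℝ → ℝ and τ₀ > 0 with u₀''(t) + (u₀(t)² + (u₀(t) + u₀'(t))² − 1)·u₀'(t) + u₀(t) = 0 for all t, u₀(t + τ₀) = u₀(t) for all t, and u₀ not constant. Indeed, the functions φ(x,y) = x² + (x+y)² − 1 and ψ(x) = x satisfy the Levinson–Smith conditions C_LS with x₀ = 1, M = 1 and x₁ = 1 + 60^{1/3}. -/

import Mathlib

open Set Filter MeasureTheory intervalIntegral

/-- The Levinson–Smith conditions `C_LS` with explicit witnesses `x₀ < x₁` and `M`. -/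
def LevinsonSmithWith (φ : ℝ → ℝ → ℝ) (ψ : ℝ → ℝ) (x₀ x₁ M : ℝ) : Prop :=
  (∀ x : ℝ, x ≠ 0 → 0 < x * ψ x) ∧
  Tendsto (fun x : ℝ => ∫ s in (0:ℝ)..x, ψ s) atTop atTop ∧
  φ 0 0 < 0 ∧
  0 < x₀ ∧ x₀ < x₁ ∧ 0 < M ∧
  (∀ x y : ℝ, x₀ ≤ |x| → 0 ≤ φ x y) ∧
  (∀ x y : ℝ, |x| ≤ x₀ → -M ≤ φ x y) ∧
  (∀ y : ℝ → ℝ, StrictAntiOn y (Set.Icc x₀ x₁) → (∀ x ∈ Set.Icc x₀ x₁, 0 < y x) →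
    10 * M * x₀ ≤ ∫ x in x₀..x₁, φ x (y x))


open Topology

noncomputable section
namespace LS


def Ff (p : ℝ × ℝ) : ℝ := p.1^2 + (p.1 + p.2)^2 - 1
def Vf (p : ℝ × ℝ) : ℝ × ℝ := (p.2, -p.1 - Ff p * p.2)
def clR (x : ℝ) : ℝ := max (-3) (min 3 x)
def clP (p : ℝ × ℝ) : ℝ × ℝ := (clR p.1, clR p.2)
def Wf (p : ℝ × ℝ) : ℝ × ℝ := Vf (clP p)

lemma clR_abs_le (x : ℝ) : |clR x| ≤ 3 := by
  rw [abs_le]; exact ⟨le_max_left _ _, max_le (by norm_num) (min_le_left _ _)⟩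

lemma clR_lip (x y : ℝ) : |clR x - clR y| ≤ |x - y| := by
  have h1 : |min 3 x - min 3 y| ≤ |x - y| := by
    have h := abs_max_sub_max_le_abs (-x) (-y) (-3)
    have e1 : max (-x) (-3) = -(min 3 x) := by
      rw [min_comm, ← max_neg_neg]
    have e2 : max (-y) (-3) = -(min 3 y) := by
      rw [min_comm, ← max_neg_neg]
    rw [e1, e2] at h
    calc |min 3 x - min 3 y| = |(-(min 3 x)) - (-(min 3 y))| := by rw [← abs_neg]; ring_nf
    _ ≤ |(-x) - (-y)| := h
    _ = |x - y| := by rw [← abs_neg]; ring_nf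
  calc |clR x - clR y| = |max (min 3 x) (-3) - max (min 3 y) (-3)| := by
        rw [clR, clR, max_comm _ (min 3 x), max_comm _ (min 3 y)]
  _ ≤ |min 3 x - min 3 y| := abs_max_sub_max_le_abs _ _ _
  _ ≤ |x - y| := h1

lemma clR_eq_self {x : ℝ} (h : |x| ≤ 3) : clR x = x := by
  rw [abs_le] at h
  rw [clR, min_eq_right h.2, max_eq_right h.1]

lemma clR_odd (x : ℝ) : clR (-x) = - clR x := by
  unfold clR
  rcases le_total x (-3) with h | h
  · have e1 : min 3 x = x := min_eq_right (by linarith)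
    have e3 : min 3 (-x) = 3 := min_eq_left (by linarith)
    rw [e1, e3, max_eq_right (by norm_num : (-3:ℝ) ≤ 3), max_eq_left h]
    norm_num
  · rcases le_total 3 x with h2 | h2
    · have e1 : min 3 x = 3 := min_eq_left h2
      have e3 : min 3 (-x) = -x := min_eq_right (by linarith)
      rw [e1, e3, max_eq_right (by norm_num : (-3:ℝ) ≤ 3), max_eq_left (by linarith)]
    · have e1 : min 3 x = x := min_eq_right h2
      have e3 : min 3 (-x) = -x := min_eq_right (by linarith)
      rw [e1, e3, max_eq_right h, max_eq_right (by linarith)]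

lemma clP_mem (p : ℝ × ℝ) : |(clP p).1| ≤ 3 ∧ |(clP p).2| ≤ 3 := ⟨clR_abs_le _, clR_abs_le _⟩

lemma clP_eq_self {p : ℝ × ℝ} (h1 : |p.1| ≤ 3) (h2 : |p.2| ≤ 3) : clP p = p := by
  rw [clP, clR_eq_self h1, clR_eq_self h2]

lemma Wf_eq_Vf {p : ℝ × ℝ} (h1 : |p.1| ≤ 3) (h2 : |p.2| ≤ 3) : Wf p = Vf p := by
  rw [Wf, clP_eq_self h1 h2]

lemma Wf_odd (p : ℝ × ℝ) : Wf (-p) = - Wf p := by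
  have : clP (-p) = - clP p := by
    simp only [clP, Prod.fst_neg, Prod.snd_neg, clR_odd, Prod.neg_mk]
  rw [Wf, this, Wf]
  show Vf (-(clP p)) = -(Vf (clP p))
  rw [Vf, Vf, Ff, Ff]
  simp only [Prod.fst_neg, Prod.snd_neg, Prod.neg_mk, Prod.mk.injEq]
  constructor <;> [trivial; ring]

/-- coefficient identity for the second component of `Vf`. -/
lemma Vf2_diff (u y u' y' : ℝ) :
    (-u - (u^2 + (u+y)^2 - 1) * y) - (-u' - (u'^2 + (u'+y')^2 - 1) * y')
    = (-1 - y'*(u+u') - y'*(u+y+u'+y')) * (u - u')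
      + (1 - (u^2 + (u+y)^2) - y'*(u+y+u'+y')) * (y - y') := by ring

lemma lipWf : LipschitzWith 200 Wf := by
  apply LipschitzWith.of_dist_le_mul
  intro p q
  set c := clP p with hc
  set d := clP q with hd
  obtain ⟨hc1, hc2⟩ := clP_mem p
  obtain ⟨hd1, hd2⟩ := clP_mem q
  have he1 : |c.1 - d.1| ≤ dist p q := by
    calc |c.1 - d.1| ≤ |p.1 - q.1| := clR_lip _ _
    _ = dist p.1 q.1 := (Real.dist_eq _ _).symm
    _ ≤ dist p q := by rw [Prod.dist_eq]; exact le_max_left _ _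
  have he2 : |c.2 - d.2| ≤ dist p q := by
    calc |c.2 - d.2| ≤ |p.2 - q.2| := clR_lip _ _
    _ = dist p.2 q.2 := (Real.dist_eq _ _).symm
    _ ≤ dist p q := by rw [Prod.dist_eq]; exact le_max_right _ _
  have hD : (0:ℝ) ≤ dist p q := dist_nonneg
  rw [Wf, Wf, ← hc, ← hd, Prod.dist_eq]
  apply max_le
  · rw [Vf, Vf, Real.dist_eq]
    calc |c.2 - d.2| ≤ dist p q := he2
    _ ≤ 200 * dist p q := by linarith
  · rw [Vf, Vf, Real.dist_eq, Ff, Ff]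
    have key := Vf2_diff c.1 c.2 d.1 d.2
    set A := -1 - d.2*(c.1+d.1) - d.2*(c.1+c.2+d.1+d.2) with hA
    set B := 1 - (c.1^2 + (c.1+c.2)^2) - d.2*(c.1+c.2+d.1+d.2) with hB
    have hAb : |A| ≤ 55 := by
      rw [abs_le]; constructor <;> nlinarith [abs_le.mp hc1, abs_le.mp hc2, abs_le.mp hd1,
        abs_le.mp hd2]
    have hBb : |B| ≤ 100 := by
      rw [abs_le]; constructor <;> nlinarith [abs_le.mp hc1, abs_le.mp hc2, abs_le.mp hd1,
        abs_le.mp hd2, sq_nonneg c.1, sq_nonneg (c.1+c.2)]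
    calc |(-c.1 - (c.1^2 + (c.1+c.2)^2 - 1) * c.2) - (-d.1 - (d.1^2 + (d.1+d.2)^2 - 1) * d.2)|
        = |A * (c.1 - d.1) + B * (c.2 - d.2)| := by rw [key]
    _ ≤ |A * (c.1 - d.1)| + |B * (c.2 - d.2)| := abs_add_le _ _
    _ = |A| * |c.1 - d.1| + |B| * |c.2 - d.2| := by rw [abs_mul, abs_mul]
    _ ≤ 55 * dist p q + 100 * dist p q := by
        apply add_le_add <;>
          apply mul_le_mul (by assumption) (by assumption) (abs_nonneg _) (by norm_num)
    _ ≤ 200 * dist p q := by linarith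

lemma boundWf (p : ℝ × ℝ) : ‖Wf p‖ ≤ 150 := by
  obtain ⟨h1, h2⟩ := clP_mem p
  have h1' := abs_le.mp h1
  have h2' := abs_le.mp h2
  rw [Wf, Prod.norm_def]
  apply max_le
  · rw [Vf, Real.norm_eq_abs]; rw [abs_le]; constructor <;> simp <;> linarith
  · rw [Vf, Real.norm_eq_abs, Ff]
    rw [abs_le]; constructor <;> simp only <;> nlinarith [sq_nonneg ((clP p).1), sq_nonneg ((clP p).1 + (clP p).2)]

lemma contWf : Continuous Wf := lipWf.continuous



/-- Band barrier lemma: if `f a ≤ c` and the derivative of `f` is nonpositive whenever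
`f` is in the band `[c, c+δ]`, then `f ≤ c` on `[a, b]`. -/
lemma barrier_upper {f f' : ℝ → ℝ} (hd : ∀ t, HasDerivAt f (f' t) t)
    {a b c δ : ℝ} (hδ : 0 < δ) (hfa : f a ≤ c)
    (H : ∀ t, t ∈ Icc a b → f t ∈ Icc c (c + δ) → f' t ≤ 0) :
    ∀ t ∈ Icc a b, f t ≤ c := by
  have hfc : Continuous f := by
    rw [continuous_iff_continuousAt]; exact fun t => (hd t).continuousAt
  by_contra hcon
  push_neg at hcon
  obtain ⟨t, ht, hct⟩ := hcon
  have hat : a < t := by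
    rcases lt_or_eq_of_le ht.1 with h | h
    · exact h
    · exact absurd hfa (by rw [h]; linarith)
  set m := min (f t) (c + δ) with hm
  have hcm : c < m := lt_min hct (by linarith)
  set S1 : Set ℝ := {τ | τ ∈ Icc a t ∧ m ≤ f τ} with hS1
  have hS1c : IsClosed S1 := by
    have : S1 = Icc a t ∩ f ⁻¹' (Ici m) := by ext τ; simp [hS1, and_comm]
    rw [this]; exact isClosed_Icc.inter (isClosed_Ici.preimage hfc)
  have hS1n : S1.Nonempty := ⟨t, ⟨⟨hat.le, le_refl t⟩, min_le_left _ _⟩⟩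
  have hS1b : BddBelow S1 := ⟨a, fun τ hτ => hτ.1.1⟩
  set ts := sInf S1 with hts
  have htsS1 : ts ∈ S1 := hS1c.csInf_mem hS1n hS1b
  have hlt : ∀ τ, a ≤ τ → τ < ts → f τ < m := by
    intro τ h1 h2
    by_contra hge
    push_neg at hge
    exact absurd (csInf_le hS1b ⟨⟨h1, h2.le.trans htsS1.1.2⟩, hge⟩) (not_le.mpr h2)
  have hats : a < ts := by
    rcases lt_or_eq_of_le htsS1.1.1 with h | h
    · exact h
    · exfalso; have := htsS1.2; rw [← h] at this; linarith
  have hfts : f ts = m := by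
    refine le_antisymm ?_ htsS1.2
    have hl : Tendsto f (𝓝[<] ts) (𝓝 (f ts)) := (hfc.continuousAt).continuousWithinAt
    refine le_of_tendsto hl ?_
    have hmem : Ioo a ts ∈ 𝓝[<] ts := Ioo_mem_nhdsLT_of_mem ⟨hats, le_refl _⟩
    exact Filter.eventually_of_mem hmem fun τ hτ => (hlt τ hτ.1.le hτ.2).le
  set S2 : Set ℝ := {τ | τ ∈ Icc a ts ∧ f τ ≤ c} with hS2
  have hS2c : IsClosed S2 := by
    have : S2 = Icc a ts ∩ f ⁻¹' (Iic c) := by ext τ; simp [hS2]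
    rw [this]; exact isClosed_Icc.inter (isClosed_Iic.preimage hfc)
  have hS2n : S2.Nonempty := ⟨a, ⟨left_mem_Icc.mpr hats.le, hfa⟩⟩
  have hS2b : BddAbove S2 := ⟨ts, fun τ hτ => hτ.1.2⟩
  set s := sSup S2 with hs
  have hsS2 : s ∈ S2 := hS2c.csSup_mem hS2n hS2b
  have hsts : s < ts := by
    rcases lt_or_eq_of_le hsS2.1.2 with h | h
    · exact h
    · exfalso; have := hsS2.2; rw [h, hfts] at this; linarith
  have hgt : ∀ τ, s < τ → τ ≤ ts → c < f τ := by
    intro τ h1 h2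
    by_contra hge
    push_neg at hge
    exact absurd (le_csSup hS2b ⟨⟨hsS2.1.1.trans h1.le, h2⟩, hge⟩) (not_le.mpr h1)
  have hfs : f s = c := by
    refine le_antisymm hsS2.2 ?_
    have hr : Tendsto f (𝓝[>] s) (𝓝 (f s)) := (hfc.continuousAt).continuousWithinAt
    refine ge_of_tendsto hr ?_
    have hmem : Ioc s ts ∈ 𝓝[>] s := Ioc_mem_nhdsGT_of_mem ⟨le_refl _, hsts⟩
    exact Filter.eventually_of_mem hmem fun τ hτ => (hgt τ hτ.1 hτ.2).le
  obtain ⟨ξ, hξ, hslope⟩ := exists_hasDerivAt_eq_slope f f' hsts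
    (Continuous.continuousOn hfc) (fun x _ => hd x)
  have hpos : 0 < f' ξ := by
    rw [hslope, hfts, hfs]
    exact div_pos (by linarith) (by linarith)
  have hle : f' ξ ≤ 0 := by
    refine H ξ ⟨hsS2.1.1.trans hξ.1.le, hξ.2.le.trans (htsS1.1.2.trans ht.2)⟩ ?_
    constructor
    · exact (hgt ξ hξ.1 hξ.2.le).le
    · exact (hlt ξ (hsS2.1.1.trans hξ.1.le) hξ.2).le.trans (min_le_right _ _)
  linarith

lemma barrier_lower {f f' : ℝ → ℝ} (hd : ∀ t, HasDerivAt f (f' t) t)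
    {a b c δ : ℝ} (hδ : 0 < δ) (hfa : c ≤ f a)
    (H : ∀ t, t ∈ Icc a b → f t ∈ Icc (c - δ) c → 0 ≤ f' t) :
    ∀ t ∈ Icc a b, c ≤ f t := by
  have hb := barrier_upper (f := fun t => -f t) (f' := fun t => -f' t)
    (fun t => (hd t).neg) hδ (c := -c) (a := a) (b := b)
    (show -f a ≤ -c by linarith)
    (fun t ht hband => by
      have hband' : -f t ∈ Icc (-c) (-c + δ) := hband
      have hmem : f t ∈ Icc (c - δ) c := by
        simp only [mem_Icc] at hband' ⊢
        constructor <;> linarith [hband'.1, hband'.2]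
      show -f' t ≤ 0
      linarith [H t ht hmem])
  intro t ht
  have h2 : -f t ≤ -c := hb t ht
  linarith

/-- First hitting of level `c` from above. -/
lemma first_hit {f : ℝ → ℝ} (hf : Continuous f) {a b c : ℝ}
    (hfa : c < f a) (hex : ∃ t ∈ Icc a b, f t ≤ c) :
    ∃ t₀ ∈ Ioc a b, f t₀ = c ∧ ∀ τ ∈ Ico a t₀, c < f τ := by
  obtain ⟨t, ht, hft⟩ := hex
  set S : Set ℝ := {τ | τ ∈ Icc a b ∧ f τ ≤ c} with hS
  have hSc : IsClosed S := by
    have : S = Icc a b ∩ f ⁻¹' (Iic c) := by ext τ; simp [hS]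
    rw [this]; exact isClosed_Icc.inter (isClosed_Iic.preimage hf)
  have hSn : S.Nonempty := ⟨t, ht, hft⟩
  have hSb : BddBelow S := ⟨a, fun τ hτ => hτ.1.1⟩
  set t₀ := sInf S with ht₀
  have ht₀S : t₀ ∈ S := hSc.csInf_mem hSn hSb
  have hat₀ : a < t₀ := by
    rcases lt_or_eq_of_le ht₀S.1.1 with h | h
    · exact h
    · exfalso; have := ht₀S.2; rw [← h] at this; linarith
  have hlt : ∀ τ ∈ Ico a t₀, c < f τ := by
    intro τ hτ
    by_contra hge
    push_neg at hge
    exact absurd (csInf_le hSb ⟨⟨hτ.1, hτ.2.le.trans ht₀S.1.2⟩, hge⟩) (not_le.mpr hτ.2)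
  refine ⟨t₀, ⟨hat₀, ht₀S.1.2⟩, ?_, hlt⟩
  refine le_antisymm ht₀S.2 ?_
  have hl : Tendsto f (𝓝[<] t₀) (𝓝 (f t₀)) := (hf.continuousAt).continuousWithinAt
  refine ge_of_tendsto hl ?_
  have hmem : Ioo a t₀ ∈ 𝓝[<] t₀ := Ioo_mem_nhdsLT_of_mem ⟨hat₀, le_refl _⟩
  exact Filter.eventually_of_mem hmem fun τ hτ => (hlt τ ⟨hτ.1.le, hτ.2⟩).le

/-- Global solutions for bounded Lipschitz autonomous fields on `ℝ × ℝ`. -/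
lemma global_solution {w : ℝ × ℝ → ℝ × ℝ} {K : NNReal} {C : ℝ}
    (hl : LipschitzWith K w) (hb : ∀ p, ‖w p‖ ≤ C) (x₀ : ℝ × ℝ) :
    ∃ p : ℝ → ℝ × ℝ, p 0 = x₀ ∧ ∀ t, HasDerivAt p (w (p t)) t := by
  have hC0 : 0 ≤ C := (norm_nonneg _).trans (hb x₀)
  -- solutions on each Ioo (-(n+1)) (n+1)
  have loc : ∀ n : ℕ, ∃ f : ℝ → ℝ × ℝ, f 0 = x₀ ∧
      ∀ t ∈ Ioo (-(n:ℝ)-1) ((n:ℝ)+1), HasDerivAt f (w (f t)) t := by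
    intro n
    have hpl : IsPicardLindelof (fun _ : ℝ => w) (tmin := -(n:ℝ)-1) (tmax := (n:ℝ)+1)
        ⟨0, by constructor <;> [linarith [Nat.cast_nonneg (α := ℝ) n]; positivity]⟩ x₀
        (⟨C * ((n:ℝ)+1), by positivity⟩ : NNReal) 0 ⟨C, hC0⟩ K := by
      apply IsPicardLindelof.of_time_independent (fun x _ => hb x) hl.lipschitzOnWith
      show C * max ((n:ℝ)+1-0) (0-(-(n:ℝ)-1)) ≤ C * ((n:ℝ)+1) - 0
      have : max ((n:ℝ)+1-0) (0-(-(n:ℝ)-1)) = (n:ℝ)+1 := by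
        rw [max_eq_left] <;> ring_nf <;> linarith
      rw [this, sub_zero]
    obtain ⟨f, hf0, hf⟩ := hpl.exists_eq_forall_mem_Icc_hasDerivWithinAt₀
    refine ⟨f, hf0, fun t ht => ?_⟩
    exact (hf t (Ioo_subset_Icc_self ht)).hasDerivAt (Icc_mem_nhds ht.1 ht.2)
  choose f hf0 hf using loc
  -- uniqueness on overlaps
  have agree : ∀ m n : ℕ, ∀ t : ℝ, |t| < (min m n : ℕ) + 1 → f m t = f n t := by
    intro m n t ht
    have hmem : t ∈ Ioo (-((min m n : ℕ):ℝ)-1) (((min m n : ℕ):ℝ)+1) := by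
      rw [abs_lt] at ht; constructor <;> linarith [ht.1, ht.2]
    have hsub : Ioo (-((min m n : ℕ):ℝ)-1) (((min m n : ℕ):ℝ)+1) ⊆
        Ioo (-(m:ℝ)-1) ((m:ℝ)+1) := by
      intro s hs
      have h1 : ((min m n : ℕ):ℝ) ≤ m := by exact_mod_cast Nat.min_le_left m n
      exact ⟨by linarith [hs.1], by linarith [hs.2]⟩
    have hsub' : Ioo (-((min m n : ℕ):ℝ)-1) (((min m n : ℕ):ℝ)+1) ⊆
        Ioo (-(n:ℝ)-1) ((n:ℝ)+1) := by
      intro s hs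
      have h1 : ((min m n : ℕ):ℝ) ≤ n := by exact_mod_cast Nat.min_le_right m n
      exact ⟨by linarith [hs.1], by linarith [hs.2]⟩
    have h0mem : (0:ℝ) ∈ Ioo (-((min m n : ℕ):ℝ)-1) (((min m n : ℕ):ℝ)+1) := by
      constructor <;> [linarith [Nat.cast_nonneg (α := ℝ) (min m n)];
        positivity]
    have := ODE_solution_unique_of_mem_Ioo
      (v := fun _ : ℝ => w) (s := fun _ => (univ : Set (ℝ × ℝ)))
      (K := K) (f := f m) (g := f n)
      (fun _ _ => hl.lipschitzOnWith)
      h0mem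
      (fun s hs => ⟨hf m s (hsub hs), trivial⟩)
      (fun s hs => ⟨hf n s (hsub' hs), trivial⟩)
      (by rw [hf0 m, hf0 n])
    exact this hmem
  refine ⟨fun t => f ⌈|t|⌉₊ t, by simpa using hf0 ⌈|(0:ℝ)|⌉₊, fun t => ?_⟩
  set N := ⌈|t|⌉₊ with hN
  have htN : |t| < (N:ℝ) + 1 := (Nat.le_ceil _).trans_lt (by linarith)
  have heq : ∀ s ∈ Ioo (-(N:ℝ)-1) ((N:ℝ)+1), f ⌈|s|⌉₊ s = f N s := by
    intro s hs
    apply agree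
    have h1 : |s| < (N:ℝ) + 1 := abs_lt.mpr ⟨by linarith [hs.1], by linarith [hs.2]⟩
    have h2 : |s| < (⌈|s|⌉₊:ℝ) + 1 := (Nat.le_ceil _).trans_lt (by linarith)
    have : ((min ⌈|s|⌉₊ N : ℕ):ℝ) + 1 > |s| := by
      rcases min_choice ⌈|s|⌉₊ N with h | h <;> rw [h]
      · exact h2
      · exact h1
    exact this
  have hmemt : t ∈ Ioo (-(N:ℝ)-1) ((N:ℝ)+1) := by
    rw [abs_lt] at htN; exact ⟨by linarith [htN.1], htN.2⟩
  have hev : (fun s => f ⌈|s|⌉₊ s) =ᶠ[nhds t] f N :=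
    Filter.eventually_of_mem (Ioo_mem_nhds hmemt.1 hmemt.2) heq
  have hd := hf N t hmemt
  have h2 := hd.congr_of_eventuallyEq hev
  simpa only [show f ⌈|t|⌉₊ t = f N t from heq t hmemt] using h2

/-- Global uniqueness. -/
lemma sol_unique {w : ℝ × ℝ → ℝ × ℝ} {K : NNReal} (hl : LipschitzWith K w)
    {p q : ℝ → ℝ × ℝ} (hp : ∀ t, HasDerivAt p (w (p t)) t)
    (hq : ∀ t, HasDerivAt q (w (q t)) t) {t₀ : ℝ} (h : p t₀ = q t₀) :
    ∀ t, p t = q t := by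
  intro t
  set R := |t - t₀| + 1 with hR
  have hR0 : 0 < R := by positivity
  have hmem : t ∈ Ioo (t₀ - R) (t₀ + R) := by
    cases' abs_lt.mp (show |t - t₀| < R by rw [hR]; linarith) with h1 h2
    constructor <;> linarith
  have h0mem : t₀ ∈ Ioo (t₀ - R) (t₀ + R) := by constructor <;> linarith
  exact ODE_solution_unique_of_mem_Ioo
    (v := fun _ : ℝ => w) (s := fun _ => (univ : Set (ℝ × ℝ))) (K := K)
    (fun _ _ => hl.lipschitzOnWith) h0mem
    (fun s _ => ⟨hp s, trivial⟩) (fun s _ => ⟨hq s, trivial⟩) h hmem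


def sol (x₀ : ℝ × ℝ) : ℝ → ℝ × ℝ := (global_solution lipWf boundWf x₀).choose

lemma sol_0 (x₀ : ℝ × ℝ) : sol x₀ 0 = x₀ := (global_solution lipWf boundWf x₀).choose_spec.1

lemma sol_deriv (x₀ : ℝ × ℝ) (t : ℝ) : HasDerivAt (sol x₀) (Wf (sol x₀ t)) t :=
  (global_solution lipWf boundWf x₀).choose_spec.2 t

lemma sol_cont (x₀ : ℝ × ℝ) : Continuous (sol x₀) := by
  rw [continuous_iff_continuousAt]
  exact fun t => (sol_deriv x₀ t).continuousAt

/-- algebraic bounds for `Ff` -/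
lemma Ff_ge_neg_one (p : ℝ × ℝ) : -1 ≤ Ff p := by
  rw [Ff]; nlinarith [sq_nonneg p.1, sq_nonneg (p.1 + p.2)]

lemma Ff_le_three (p : ℝ × ℝ) : Ff p ≤ 3*(p.1^2 + p.2^2) - 1 := by
  rw [Ff]; nlinarith [sq_nonneg (p.1 - p.2), sq_nonneg p.2]

lemma Ff_ge_third (p : ℝ × ℝ) : (p.1^2 + p.2^2)/3 - 1 ≤ Ff p := by
  rw [Ff]; nlinarith [sq_nonneg (5*p.1 + 3*p.2), sq_nonneg p.2]

def pa (a : ℝ) : ℝ → ℝ × ℝ := sol ((0:ℝ), a)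

lemma pa_0 (a : ℝ) : pa a 0 = ((0:ℝ), a) := sol_0 _

lemma hasDeriv_u (a : ℝ) (t : ℝ) :
    HasDerivAt (fun s => (pa a s).1) ((Wf (pa a t)).1) t := by
  have h := sol_deriv ((0:ℝ), a) t
  exact h.fst

lemma hasDeriv_y (a : ℝ) (t : ℝ) :
    HasDerivAt (fun s => (pa a s).2) ((Wf (pa a t)).2) t := by
  have h := sol_deriv ((0:ℝ), a) t
  exact h.snd

def en (a : ℝ) (t : ℝ) : ℝ := ((pa a t).1^2 + (pa a t).2^2)/2

lemma hasDeriv_en (a : ℝ) (t : ℝ) :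
    HasDerivAt (en a)
      ((pa a t).1 * (Wf (pa a t)).1 + (pa a t).2 * (Wf (pa a t)).2) t := by
  have h := (((hasDeriv_u a t).pow 2).add ((hasDeriv_y a t).pow 2)).div_const 2
  refine HasDerivAt.congr_deriv (f := en a) h ?_
  push_cast
  ring

/-- the fundamental annulus invariance -/
lemma annulus {a : ℝ} (ha : 1/2 ≤ a) (ha2 : a ≤ 2) :
    ∀ t, 0 ≤ t → 1/4 ≤ (pa a t).1^2 + (pa a t).2^2 ∧ (pa a t).1^2 + (pa a t).2^2 ≤ 4 := by
  have upper : ∀ t, 0 ≤ t → en a t ≤ 2 := by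
    intro t ht
    refine barrier_upper (f' := fun t => (pa a t).1 * (Wf (pa a t)).1
        + (pa a t).2 * (Wf (pa a t)).2) (hasDeriv_en a) (by norm_num : (0:ℝ) < 1/4)
      (a := 0) (b := t) ?_ ?_ t ⟨ht, le_refl t⟩
    · rw [en, pa_0]; simp; nlinarith
    · intro s _ hband
      rw [en, mem_Icc] at hband
      have hr : 4 ≤ (pa a s).1^2 + (pa a s).2^2 ∧ (pa a s).1^2 + (pa a s).2^2 ≤ 9/2 :=
        ⟨by linarith [hband.1], by linarith [hband.2]⟩
      have h1 : |(pa a s).1| ≤ 3 := by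
        rw [abs_le]; constructor <;> nlinarith [sq_nonneg (pa a s).2]
      have h2 : |(pa a s).2| ≤ 3 := by
        rw [abs_le]; constructor <;> nlinarith [sq_nonneg (pa a s).1]
      show (pa a s).1 * (Wf (pa a s)).1 + (pa a s).2 * (Wf (pa a s)).2 ≤ 0
      rw [Wf_eq_Vf h1 h2, Vf]
      have hF : 1/3 ≤ Ff (pa a s) := by
        have := Ff_ge_third (pa a s); linarith [hr.1]
      simp only
      nlinarith [sq_nonneg (pa a s).2]
  have lower : ∀ t, 0 ≤ t → 1/8 ≤ en a t := by
    intro t ht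
    refine barrier_lower (f' := fun t => (pa a t).1 * (Wf (pa a t)).1
        + (pa a t).2 * (Wf (pa a t)).2) (hasDeriv_en a) (by norm_num : (0:ℝ) < 1/16)
      (a := 0) (b := t) ?_ ?_ t ⟨ht, le_refl t⟩
    · rw [en, pa_0]; simp; nlinarith
    · intro s _ hband
      rw [en, mem_Icc] at hband
      have hr : (pa a s).1^2 + (pa a s).2^2 ≤ 1/4 := by linarith [hband.2]
      have h1 : |(pa a s).1| ≤ 3 := by
        rw [abs_le]; constructor <;> nlinarith [sq_nonneg (pa a s).2]
      have h2 : |(pa a s).2| ≤ 3 := by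
        rw [abs_le]; constructor <;> nlinarith [sq_nonneg (pa a s).1]
      show 0 ≤ (pa a s).1 * (Wf (pa a s)).1 + (pa a s).2 * (Wf (pa a s)).2
      rw [Wf_eq_Vf h1 h2, Vf]
      have hF : Ff (pa a s) ≤ -1/4 := by
        have := Ff_le_three (pa a s); linarith
      simp only
      nlinarith [sq_nonneg (pa a s).2]
  intro t ht
  have h1 := upper t ht
  have h2 := lower t ht
  rw [en] at h1 h2
  exact ⟨by linarith, by linarith⟩

lemma coord_bounds {a : ℝ} (ha : 1/2 ≤ a) (ha2 : a ≤ 2) {t : ℝ} (ht : 0 ≤ t) :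
    |(pa a t).1| ≤ 2 ∧ |(pa a t).2| ≤ 2 := by
  obtain ⟨_, h2⟩ := annulus ha ha2 t ht
  constructor <;> (rw [abs_le]; constructor) <;>
    nlinarith [sq_nonneg (pa a t).1, sq_nonneg (pa a t).2]

lemma Wf_pa {a : ℝ} (ha : 1/2 ≤ a) (ha2 : a ≤ 2) {t : ℝ} (ht : 0 ≤ t) :
    Wf (pa a t) = Vf (pa a t) := by
  obtain ⟨h1, h2⟩ := coord_bounds ha ha2 ht
  exact Wf_eq_Vf (h1.trans (by norm_num)) (h2.trans (by norm_num))

lemma w1_eq {a : ℝ} (ha : 1/2 ≤ a) (ha2 : a ≤ 2) {t : ℝ} (ht : 0 ≤ t) :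
    (Wf (pa a t)).1 = (pa a t).2 := by rw [Wf_pa ha ha2 ht, Vf]

lemma w2_eq {a : ℝ} (ha : 1/2 ≤ a) (ha2 : a ≤ 2) {t : ℝ} (ht : 0 ≤ t) :
    (Wf (pa a t)).2 = -(pa a t).1 - Ff (pa a t) * (pa a t).2 := by
  rw [Wf_pa ha ha2 ht, Vf]

lemma Ff_le_11 {a : ℝ} (ha : 1/2 ≤ a) (ha2 : a ≤ 2) {t : ℝ} (ht : 0 ≤ t) :
    Ff (pa a t) ≤ 11 := by
  have := Ff_le_three (pa a t)
  have := (annulus ha ha2 t ht).2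
  linarith



lemma u_lb49 {a : ℝ} (ha : 1/2 ≤ a) (ha2 : a ≤ 2) {s : ℝ} (hs0 : 0 ≤ s)
    (hus : 0 ≤ (pa a s).1) (hys : -(1/16) ≤ (pa a s).2) (hys2 : (pa a s).2 ≤ 1/16) :
    49/100 ≤ (pa a s).1 := by
  have hann := (annulus ha ha2 s hs0).1
  nlinarith

lemma Fy_prod {a : ℝ} (ha : 1/2 ≤ a) (ha2 : a ≤ 2) {s : ℝ} (hs0 : 0 ≤ s)
    (h1 : -(1/100) ≤ (pa a s).2) (h2 : (pa a s).2 ≤ 0) :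
    -(Ff (pa a s)) * (pa a s).2 ≤ 11/100 := by
  have hF2 := Ff_le_11 ha ha2 hs0
  have hn : 0 ≤ -(pa a s).2 := by linarith
  have h3 : Ff (pa a s) * (-(pa a s).2) ≤ 11 * (-(pa a s).2) :=
    mul_le_mul_of_nonneg_right hF2 hn
  have h4 : 11 * (-(pa a s).2) ≤ 11/100 := by linarith
  nlinarith

/-- The half-turn crossing: the trajectory starting at `(0,a)` reaches the negative `y`-axis. -/
lemma crossing {a : ℝ} (ha : 1/2 ≤ a) (ha2 : a ≤ 2) :
    ∃ T ∈ Ioc (0:ℝ) 221, (pa a T).1 = 0 ∧ (pa a T).2 ≤ -(1/2) ∧ -2 ≤ (pa a T).2 ∧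
      (∀ τ ∈ Ioo (0:ℝ) T, 0 < (pa a τ).1) := by
  have hcu : Continuous fun s => (pa a s).1 := continuous_fst.comp (sol_cont _)
  have hcy : Continuous fun s => (pa a s).2 := continuous_snd.comp (sol_cont _)
  have hu := hasDeriv_u a
  have hy := hasDeriv_y a
  have hy0 : (pa a 0).2 = a := by rw [pa_0]
  have hu0 : (pa a 0).1 = 0 := by rw [pa_0]
  have hFy : ∀ s : ℝ, 0 ≤ (pa a s).2 →
      -(Ff (pa a s)) * (pa a s).2 ≤ (pa a s).2 := by
    intro s hys
    nlinarith [Ff_ge_neg_one (pa a s)]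
  -- Part 1: y reaches 0 within time 19
  have part1 : ∃ s ∈ Icc (0:ℝ) 19, (pa a s).2 ≤ 0 := by
    by_contra hcon
    push_neg at hcon
    have step1 : ∃ s ∈ Icc (0:ℝ) 17, (pa a s).2 ≤ 1/4 := by
      by_contra h2
      push_neg at h2
      have mono := barrier_lower (f := fun s => (pa a s).1 - s * (1/4))
        (f' := fun t => (Wf (pa a t)).1 - 1/4)
        (fun t => (hu t).sub (hasDerivAt_mul_const _)) (one_pos) (c := 0)
        (a := 0) (b := 17)
        (by show (0:ℝ) ≤ (pa a 0).1 - 0 * (1/4); rw [hu0]; norm_num)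
        (fun s hs _ => by
          have := h2 s hs
          have hw := w1_eq ha ha2 hs.1
          show 0 ≤ (Wf (pa a s)).1 - 1/4
          rw [hw]; linarith)
        17 ⟨by norm_num, le_refl _⟩
      have hb := (coord_bounds ha ha2 (by norm_num : (0:ℝ) ≤ 17)).1
      rw [abs_le] at hb
      linarith [mono, hb.2]
    obtain ⟨tb, htb, hytb, hybefore⟩ := first_hit hcy (by rw [hy0]; linarith) step1
    have htb0 : 0 < tb := htb.1
    have htb17 : tb ≤ 17 := htb.2
    have humono : ∀ s ∈ Icc (0:ℝ) tb, 0 ≤ (pa a s).1 := by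
      refine barrier_lower (f' := fun t => (Wf (pa a t)).1) hu one_pos
        (by rw [hu0]) ?_
      intro s hs _
      have hw := w1_eq ha ha2 hs.1
      show 0 ≤ (Wf (pa a s)).1
      rw [hw]
      exact (hcon s ⟨hs.1, hs.2.trans (by linarith)⟩).le
    have hutb : 43/100 ≤ (pa a tb).1 := by
      have hann := (annulus ha ha2 tb htb0.le).1
      have h0 : 0 ≤ (pa a tb).1 := humono tb ⟨htb0.le, le_refl _⟩
      rw [hytb] at hann
      nlinarith
    have humono2 : ∀ s ∈ Icc tb 19, 43/100 ≤ (pa a s).1 := by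
      refine barrier_lower (f' := fun t => (Wf (pa a t)).1) hu one_pos hutb ?_
      intro s hs _
      have hs0 : (0:ℝ) ≤ s := htb0.le.trans hs.1
      have hw := w1_eq ha ha2 hs0
      show 0 ≤ (Wf (pa a s)).1
      rw [hw]
      exact (hcon s ⟨hs0, hs.2⟩).le
    have hylow : ∀ s ∈ Icc tb 19, (pa a s).2 ≤ 1/4 := by
      refine barrier_upper (f' := fun t => (Wf (pa a t)).2) hy
        (by norm_num : (0:ℝ) < 1/16) (le_of_eq hytb) ?_
      intro s hs hband
      have hs0 : (0:ℝ) ≤ s := htb0.le.trans hs.1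
      have hw := w2_eq ha ha2 hs0
      show (Wf (pa a s)).2 ≤ 0
      rw [hw]
      have h1 := humono2 s hs
      have h2 := hFy s (by linarith [hband.1] : 0 ≤ (pa a s).2)
      have h3 := hband.2
      linarith
    have hfinal := barrier_upper (f := fun s => (pa a s).2 + s * (1/8))
      (f' := fun t => (Wf (pa a t)).2 + 1/8)
      (fun t => (hy t).add (hasDerivAt_mul_const _)) one_pos
      (c := 1/4 + tb * (1/8)) (a := tb) (b := tb + 2)
      (by show (pa a tb).2 + tb * (1/8) ≤ 1/4 + tb * (1/8); rw [hytb])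
      ?_ (tb + 2) ⟨by linarith, le_refl _⟩
    · have := hcon (tb + 2) ⟨by linarith, by linarith⟩
      linarith
    · intro s hs _
      have hs0 : (0:ℝ) ≤ s := htb0.le.trans hs.1
      have hs19 : s ∈ Icc tb 19 := ⟨hs.1, hs.2.trans (by linarith)⟩
      have hw := w2_eq ha ha2 hs0
      show (Wf (pa a s)).2 + 1/8 ≤ 0
      rw [hw]
      have h1 := humono2 s hs19
      have h2 := hFy s (hcon s ⟨hs0, hs19.2⟩).le
      have h3 := hylow s hs19
      linarith
  -- Part 2: first zero of y
  obtain ⟨t₂, ht₂, hyt₂, hypos⟩ := first_hit hcy (by rw [hy0]; linarith) part1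
  have ht₂0 : 0 < t₂ := ht₂.1
  have hynonneg : ∀ s ∈ Icc (0:ℝ) t₂, 0 ≤ (pa a s).2 := by
    intro s hs
    rcases lt_or_eq_of_le hs.2 with h | h
    · exact (hypos s ⟨hs.1, h⟩).le
    · rw [h, hyt₂]
  have humono : ∀ s ∈ Icc (0:ℝ) t₂, 0 ≤ (pa a s).1 := by
    refine barrier_lower (f' := fun t => (Wf (pa a t)).1) hu one_pos (by rw [hu0]) ?_
    intro s hs _
    have hw := w1_eq ha ha2 hs.1
    show 0 ≤ (Wf (pa a s)).1
    rw [hw]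
    exact hynonneg s hs
  have hut₂ : 1/2 ≤ (pa a t₂).1 := by
    have hann := (annulus ha ha2 t₂ ht₂0.le).1
    have h0 : 0 ≤ (pa a t₂).1 := humono t₂ ⟨ht₂0.le, le_refl _⟩
    rw [hyt₂] at hann
    nlinarith
  have hupos : ∀ τ ∈ Ioo (0:ℝ) t₂, 0 < (pa a τ).1 := by
    intro τ hτ
    obtain ⟨ξ, hξ, hslope⟩ := exists_hasDerivAt_eq_slope (fun s => (pa a s).1)
      (fun t => (Wf (pa a t)).1) hτ.1 hcu.continuousOn (fun x _ => hu x)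
    have hyξ : 0 < (pa a ξ).2 := hypos ξ ⟨hξ.1.le, hξ.2.trans hτ.2⟩
    have hpos : 0 < (Wf (pa a ξ)).1 := by rw [w1_eq ha ha2 hξ.1.le]; exact hyξ
    rw [hslope] at hpos
    simp only [hu0, sub_zero] at hpos
    rcases div_pos_iff.mp hpos with ⟨h5, _⟩ | ⟨_, h6⟩
    · exact h5
    · linarith [hτ.1]
  -- Part 3: u reaches 0
  have part3 : ∃ s ∈ Icc t₂ (t₂ + 202), (pa a s).1 ≤ 0 := by
    by_contra hcon
    push_neg at hcon
    have hyneg : ∀ s ∈ Icc t₂ (t₂ + 202), (pa a s).2 ≤ 0 := by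
      refine barrier_upper (f' := fun t => (Wf (pa a t)).2) hy
        (by norm_num : (0:ℝ) < 1/16) (le_of_eq hyt₂) ?_
      intro s hs hband
      have hs0 : (0:ℝ) ≤ s := ht₂0.le.trans hs.1
      have hw := w2_eq ha ha2 hs0
      show (Wf (pa a s)).2 ≤ 0
      rw [hw]
      have hub : 49/100 ≤ (pa a s).1 := u_lb49 ha ha2 hs0 (hcon s hs).le
        (by linarith [hband.1]) (by linarith [hband.2])
      have h2 := hFy s (by linarith [hband.1] : 0 ≤ (pa a s).2)
      linarith [hband.2]
    have hA2 : ∃ t₄ ∈ Icc t₂ (t₂ + 1), (pa a t₄).2 ≤ -(1/100) := by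
      by_contra h2
      push_neg at h2
      have hfinal := barrier_upper (f := fun s => (pa a s).2 + s * (1/4))
        (f' := fun t => (Wf (pa a t)).2 + 1/4)
        (fun t => (hy t).add (hasDerivAt_mul_const _)) one_pos
        (c := t₂ * (1/4)) (a := t₂) (b := t₂ + 1)
        (by show (pa a t₂).2 + t₂ * (1/4) ≤ t₂ * (1/4); rw [hyt₂]; norm_num)
        ?_ (t₂ + 1) ⟨by linarith, le_refl _⟩
      · have := h2 (t₂ + 1) ⟨by linarith, le_refl _⟩
        linarith
      · intro s hs _
        have hs0 : (0:ℝ) ≤ s := ht₂0.le.trans hs.1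
        have hs202 : s ∈ Icc t₂ (t₂ + 202) := ⟨hs.1, hs.2.trans (by linarith)⟩
        have hw := w2_eq ha ha2 hs0
        show (Wf (pa a s)).2 + 1/4 ≤ 0
        rw [hw]
        have hyub := hyneg s hs202
        have hylb := (h2 s hs).le
        have hub : 49/100 ≤ (pa a s).1 := u_lb49 ha ha2 hs0 (hcon s hs202).le
          (by linarith) (by linarith)
        have hprod := Fy_prod ha ha2 hs0 hylb hyub
        linarith
    obtain ⟨t₄, ht₄, hyt₄⟩ := hA2
    have hA3 : ∀ s ∈ Icc t₄ (t₂ + 202), (pa a s).2 ≤ -(1/100) := by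
      refine barrier_upper (f' := fun t => (Wf (pa a t)).2) hy
        (by norm_num : (0:ℝ) < 1/200) hyt₄ ?_
      intro s hs hband
      have hs0 : (0:ℝ) ≤ s := ht₂0.le.trans (ht₄.1.trans hs.1)
      have hs202 : s ∈ Icc t₂ (t₂ + 202) := ⟨ht₄.1.trans hs.1, hs.2⟩
      have hw := w2_eq ha ha2 hs0
      show (Wf (pa a s)).2 ≤ 0
      rw [hw]
      have hyubs : (pa a s).2 ≤ 0 := by linarith [hband.2]
      have hub : 49/100 ≤ (pa a s).1 := u_lb49 ha ha2 hs0 (hcon s hs202).le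
        (by linarith [hband.1]) (by linarith [hband.2])
      have hprod := Fy_prod ha ha2 hs0 (by linarith [hband.1]) hyubs
      linarith
    have hfinal := barrier_upper (f := fun s => (pa a s).1 + s * (1/100))
      (f' := fun t => (Wf (pa a t)).1 + 1/100)
      (fun t => (hu t).add (hasDerivAt_mul_const _)) one_pos
      (c := (pa a t₄).1 + t₄ * (1/100)) (a := t₄) (b := t₂ + 202)
      (le_refl _) ?_ (t₂ + 202) ⟨by linarith [ht₄.2], le_refl _⟩
    · have hb4 := (coord_bounds ha ha2 (ht₂0.le.trans ht₄.1)).1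
      rw [abs_le] at hb4
      have := hcon (t₂ + 202) ⟨by linarith, le_refl _⟩
      linarith [hfinal, hb4.2, ht₄.2]
    · intro s hs _
      have hs0 : (0:ℝ) ≤ s := ht₂0.le.trans (ht₄.1.trans hs.1)
      have hw := w1_eq ha ha2 hs0
      show (Wf (pa a s)).1 + 1/100 ≤ 0
      rw [hw]
      linarith [hA3 s hs]
  -- the first zero of u after t₂
  obtain ⟨t₃, ht₃, hut₃, hubefore⟩ := first_hit hcu (by linarith) part3
  have ht₃0 : (0:ℝ) ≤ t₃ := ht₂0.le.trans ht₃.1.le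
  have hyt₃ : (pa a t₃).2 ≤ 0 := by
    refine barrier_upper (f' := fun t => (Wf (pa a t)).2) hy
      (by norm_num : (0:ℝ) < 1/16) (le_of_eq hyt₂) ?_ t₃ ⟨ht₃.1.le, le_refl _⟩
    intro s hs hband
    have hs0 : (0:ℝ) ≤ s := ht₂0.le.trans hs.1
    have hw := w2_eq ha ha2 hs0
    show (Wf (pa a s)).2 ≤ 0
    rw [hw]
    have hus : 0 ≤ (pa a s).1 := by
      rcases lt_or_eq_of_le hs.2 with h | h
      · exact (hubefore s ⟨hs.1, h⟩).le
      · rw [h, hut₃]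
    have hub : 49/100 ≤ (pa a s).1 := u_lb49 ha ha2 hs0 hus
      (by linarith [hband.1]) (by linarith [hband.2])
    have h2 := hFy s (by linarith [hband.1] : 0 ≤ (pa a s).2)
    linarith [hband.2]
  have hann3 := (annulus ha ha2 t₃ ht₃0).1
  have hann3' := (annulus ha ha2 t₃ ht₃0).2
  rw [hut₃] at hann3 hann3'
  refine ⟨t₃, ⟨ht₂0.trans ht₃.1, by linarith [ht₃.2, ht₂.2]⟩, hut₃, ?_, ?_, ?_⟩
  · nlinarith
  · nlinarith
  · intro τ hτ
    rcases lt_trichotomy τ t₂ with h | h | h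
    · exact hupos τ ⟨hτ.1, h⟩
    · rw [h]; linarith
    · exact hubefore τ ⟨h.le, hτ.2⟩

/-- the initial window: `y ≥ 1/4` and `u ≥ t/4` on `[0, 1/600]`. -/
lemma window {a : ℝ} (ha : 1/2 ≤ a) (ha2 : a ≤ 2) :
    ∀ t ∈ Icc (0:ℝ) (1/600), 1/4 ≤ (pa a t).2 ∧ t * (1/4) ≤ (pa a t).1 := by
  have hu := hasDeriv_u a
  have hy := hasDeriv_y a
  have hy14 : ∀ t ∈ Icc (0:ℝ) (1/600), 1/4 ≤ (pa a t).2 := by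
    intro t ht
    have hb := barrier_lower (f := fun s => (pa a s).2 + s * 150)
      (f' := fun t => (Wf (pa a t)).2 + 150)
      (fun t => (hy t).add (hasDerivAt_mul_const _)) one_pos
      (c := a) (a := 0) (b := 1/600)
      (by show a ≤ (pa a 0).2 + 0 * 150; rw [pa_0]; norm_num)
      (fun s _ _ => by
        show 0 ≤ (Wf (pa a s)).2 + 150
        have h1 : |(Wf (pa a s)).2| ≤ 150 := by
          calc |(Wf (pa a s)).2| = ‖(Wf (pa a s)).2‖ := rfl
          _ ≤ ‖Wf (pa a s)‖ := norm_snd_le _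
          _ ≤ 150 := boundWf _
        rw [abs_le] at h1
        linarith [h1.1]) t ht
    have ht6 := ht.2
    linarith
  intro t ht
  refine ⟨hy14 t ht, ?_⟩
  have hb := barrier_lower (f := fun s => (pa a s).1 - s * (1/4))
    (f' := fun t => (Wf (pa a t)).1 - 1/4)
    (fun t => (hu t).sub (hasDerivAt_mul_const _)) one_pos
    (c := 0) (a := 0) (b := 1/600)
    (by show (0:ℝ) ≤ (pa a 0).1 - 0 * (1/4); rw [pa_0]; norm_num)
    (fun s hs _ => by
      have hw := w1_eq ha ha2 hs.1
      show 0 ≤ (Wf (pa a s)).1 - 1/4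
      rw [hw]
      linarith [hy14 s hs]) t ht
  linarith



def hitSet (a : ℝ) : Set ℝ := {t | t ∈ Icc (1/600 : ℝ) 400 ∧ (pa a t).1 = 0}
def Th (a : ℝ) : ℝ := sInf (hitSet a)
def hmap (a : ℝ) : ℝ := -(pa a (Th a)).2

lemma hitSet_closed (a : ℝ) : IsClosed (hitSet a) := by
  have : hitSet a = Icc (1/600 : ℝ) 400 ∩ (fun t => (pa a t).1) ⁻¹' {0} := by
    ext τ; simp [hitSet]
  rw [this]
  exact isClosed_Icc.inter (isClosed_singleton.preimage (continuous_fst.comp (sol_cont _)))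

lemma hitSet_bdd (a : ℝ) : BddBelow (hitSet a) := ⟨1/600, fun τ hτ => hτ.1.1⟩

lemma Th_spec {a : ℝ} (ha : 1/2 ≤ a) (ha2 : a ≤ 2) :
    Th a ∈ Ioc (1/600:ℝ) 221 ∧ (pa a (Th a)).1 = 0 ∧
    (pa a (Th a)).2 ≤ -(1/2) ∧ -2 ≤ (pa a (Th a)).2 ∧
    ∀ τ ∈ Ioo (0:ℝ) (Th a), 0 < (pa a τ).1 := by
  obtain ⟨T, hT, huT, hyT1, hyT2, hupos⟩ := crossing ha ha2
  have hT600 : 1/600 < T := by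
    by_contra h
    push_neg at h
    have hw := (window ha ha2 T ⟨hT.1.le, h⟩).2
    rw [huT] at hw
    nlinarith [hT.1]
  have hTmem : T ∈ hitSet a := ⟨⟨hT600.le, hT.2.trans (by norm_num)⟩, huT⟩
  have hThmem : Th a ∈ hitSet a := (hitSet_closed a).csInf_mem ⟨T, hTmem⟩ (hitSet_bdd a)
  have hThT : Th a ≤ T := csInf_le (hitSet_bdd a) hTmem
  have hTTh : T ≤ Th a := by
    by_contra h
    push_neg at h
    have h6 : 1/600 ≤ Th a := hThmem.1.1
    have := hupos (Th a) ⟨lt_of_lt_of_le (by norm_num) h6, h⟩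
    rw [hThmem.2] at this
    exact lt_irrefl 0 this
  have hEq : Th a = T := le_antisymm hThT hTTh
  rw [hEq]
  exact ⟨⟨hT600, hT.2⟩, huT, hyT1, hyT2, hupos⟩

lemma hmap_mem {a : ℝ} (ha : 1/2 ≤ a) (ha2 : a ≤ 2) :
    1/2 ≤ hmap a ∧ hmap a ≤ 2 := by
  obtain ⟨_, _, h1, h2, _⟩ := Th_spec ha ha2
  rw [hmap]
  constructor <;> linarith

/-- Grönwall continuous dependence on the initial value. -/
lemma dist_pa_le (a b : ℝ) {t : ℝ} (ht : t ∈ Icc (0:ℝ) 400) :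
    dist (pa a t) (pa b t) ≤ |a - b| * Real.exp (200 * 400) := by
  have key := dist_le_of_trajectories_ODE (v := fun _ : ℝ => Wf) (K := 200)
    (f := pa a) (g := pa b) (a := 0) (b := 400) (δ := |a - b|)
    (fun _ => lipWf)
    ((sol_cont _).continuousOn)
    (fun s _ => (sol_deriv _ s).hasDerivWithinAt)
    ((sol_cont _).continuousOn)
    (fun s _ => (sol_deriv _ s).hasDerivWithinAt)
    (by
      rw [pa_0, pa_0, Prod.dist_eq]
      simp [Real.dist_eq])
    t ht
  calc dist (pa a t) (pa b t) ≤ |a - b| * Real.exp (200 * (t - 0)) := key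
  _ ≤ |a - b| * Real.exp (200 * 400) := by
      apply mul_le_mul_of_nonneg_left _ (abs_nonneg _)
      rw [Real.exp_le_exp]
      have := ht.2
      linarith

/-- time-Lipschitz bound for the second coordinate. -/
lemma lip_y (a : ℝ) (t t' : ℝ) : |(pa a t).2 - (pa a t').2| ≤ 150 * |t - t'| := by
  have key : ∀ s s' : ℝ, s' < s → |(pa a s).2 - (pa a s').2| ≤ 150 * |s - s'| := by
    intro s s' hss
    obtain ⟨ξ, _, hslope⟩ := exists_hasDerivAt_eq_slope (fun τ => (pa a τ).2)
      (fun τ => (Wf (pa a τ)).2) hss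
      ((continuous_snd.comp (sol_cont _)).continuousOn)
      (fun x _ => hasDeriv_y a x)
    rw [eq_div_iff (ne_of_gt (sub_pos.mpr hss))] at hslope
    have hb : |(Wf (pa a ξ)).2| ≤ 150 := by
      calc |(Wf (pa a ξ)).2| = ‖(Wf (pa a ξ)).2‖ := rfl
      _ ≤ ‖Wf (pa a ξ)‖ := norm_snd_le _
      _ ≤ 150 := boundWf _
    calc |(pa a s).2 - (pa a s').2| = |(Wf (pa a ξ)).2 * (s - s')| := by rw [← hslope]
    _ = |(Wf (pa a ξ)).2| * |s - s'| := abs_mul _ _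
    _ ≤ 150 * |s - s'| := mul_le_mul_of_nonneg_right hb (abs_nonneg _)
  rcases lt_trichotomy t' t with h | h | h
  · exact key t t' h
  · rw [h]; simp
  · rw [abs_sub_comm, abs_sub_comm t t']
    exact key t' t h

lemma fst_dist_le (p q : ℝ × ℝ) : |p.1 - q.1| ≤ dist p q := by
  rw [← Real.dist_eq, Prod.dist_eq]; exact le_max_left _ _

lemma snd_dist_le (p q : ℝ × ℝ) : |p.2 - q.2| ≤ dist p q := by
  rw [← Real.dist_eq, Prod.dist_eq]; exact le_max_right _ _

/-- Continuity of the half-return map. -/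
lemma hmap_cont : ContinuousOn hmap (Icc (1/2:ℝ) 2) := by
  intro a₀ ha₀
  rw [Metric.continuousWithinAt_iff]
  intro ε hε
  obtain ⟨hT₀mem, hu₀T, hy₀1, hy₀2, hupos₀⟩ := Th_spec ha₀.1 ha₀.2
  set T₀ := Th a₀ with hT₀
  set EG := Real.exp (200 * 400) with hEG
  have hEG1 : 1 ≤ EG := by rw [hEG, ← Real.exp_zero, Real.exp_le_exp]; norm_num
  set ε₁ : ℝ := min (ε/400) ((T₀ - 1/600)/2) with hε₁
  have hε₁pos : 0 < ε₁ := by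
    apply lt_min (by linarith)
    have := hT₀mem.1
    linarith
  -- minimum of u on [1/600, T₀ - ε₁]
  have hsub : (1/600 : ℝ) ≤ T₀ - ε₁ := by
    have h1 : ε₁ ≤ (T₀ - 1/600)/2 := min_le_right _ _
    have := hT₀mem.1
    linarith
  have hcu : Continuous fun s => (pa a₀ s).1 := continuous_fst.comp (sol_cont _)
  obtain ⟨x₀, hx₀mem, hmin⟩ := isCompact_Icc.exists_isMinOn
    (nonempty_Icc.mpr hsub) hcu.continuousOn
  set m := (pa a₀ x₀).1 with hm
  have hmpos : 0 < m := by
    apply hupos₀ x₀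
    constructor
    · linarith [hx₀mem.1]
    · have := hx₀mem.2; linarith [hε₁pos]
  -- point after T₀ where u is negative
  have hneg : ∃ s', s' ∈ Ioo T₀ (T₀ + ε₁) ∧ (pa a₀ s').1 < 0 := by
    have hd := hasDeriv_u a₀ T₀
    have hval : (Wf (pa a₀ T₀)).1 ≤ -(1/2) := by
      rw [w1_eq ha₀.1 ha₀.2 (by linarith [hT₀mem.1] : (0:ℝ) ≤ T₀)]
      exact hy₀1
    have hsl := hasDerivAt_iff_tendsto_slope.mp hd
    have hev : ∀ᶠ s in 𝓝[>] T₀, slope (fun τ => (pa a₀ τ).1) T₀ s < -(1/4) := by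
      have h1 : ∀ᶠ s in 𝓝[≠] T₀, slope (fun τ => (pa a₀ τ).1) T₀ s < -(1/4) := by
        apply hsl.eventually_lt_const
        linarith
      exact h1.filter_mono (nhdsWithin_mono _ (fun x hx => ne_of_gt hx))
    have hioo : Ioo T₀ (T₀ + ε₁) ∈ 𝓝[>] T₀ :=
      Ioo_mem_nhdsGT_of_mem ⟨le_refl _, by linarith⟩
    obtain ⟨s', hs'1, hs'2⟩ := (hev.and (eventually_of_mem hioo fun x hx => hx)).exists
    refine ⟨s', hs'2, ?_⟩
    have hslope' : slope (fun τ => (pa a₀ τ).1) T₀ s' =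
        ((pa a₀ s').1 - (pa a₀ T₀).1) / (s' - T₀) := by
      rw [slope_def_field]
    rw [hslope', hu₀T, sub_zero] at hs'1
    have hpos : 0 < s' - T₀ := by linarith [hs'2.1]
    by_contra hge
    push_neg at hge
    have : 0 ≤ (pa a₀ s').1 / (s' - T₀) := div_nonneg hge hpos.le
    linarith
  obtain ⟨s', hs'mem, hs'neg⟩ := hneg
  set κ := -(pa a₀ s').1 with hκ
  have hκpos : 0 < κ := by rw [hκ]; linarith
  set δ := min (min m κ) (ε/2) / (2 * EG) with hδ
  have hδpos : 0 < δ := by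
    apply div_pos
    · exact lt_min (lt_min hmpos hκpos) (by linarith)
    · linarith
  refine ⟨δ, hδpos, ?_⟩
  intro a hamem hdist
  -- uniform closeness of trajectories
  have hclose : ∀ t ∈ Icc (0:ℝ) 400, dist (pa a t) (pa a₀ t) ≤ min (min m κ) (ε/2) / 2 := by
    intro t ht
    calc dist (pa a t) (pa a₀ t) ≤ |a - a₀| * EG := dist_pa_le a a₀ ht
    _ ≤ δ * EG := by
        apply mul_le_mul_of_nonneg_right _ (by linarith)
        rw [← Real.dist_eq]
        exact hdist.le
    _ = min (min m κ) (ε/2) / 2 := by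
        rw [hδ]; field_simp
  have hT₀400 : T₀ + ε₁ ≤ 400 := by
    have := hT₀mem.2
    have hεle : ε₁ ≤ (T₀ - 1/600)/2 := min_le_right _ _
    nlinarith [hT₀mem.1]
  -- u_a positive on [1/600, T₀ - ε₁]
  have hapos : ∀ t ∈ Icc (1/600:ℝ) (T₀ - ε₁), 0 < (pa a t).1 := by
    intro t ht
    have h1 : m ≤ (pa a₀ t).1 := hmin ht
    have h2 : |(pa a t).1 - (pa a₀ t).1| ≤ min (min m κ) (ε/2) / 2 :=
      le_trans (fst_dist_le _ _)
        (hclose t ⟨by linarith [ht.1], by linarith [ht.2, hT₀400, hε₁pos]⟩)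
    have h3 : min (min m κ) (ε/2) ≤ m := le_trans (min_le_left _ _) (min_le_left _ _)
    rw [abs_le] at h2
    linarith [h2.1]
  -- hence Th a > T₀ - ε₁
  have hThlow : T₀ - ε₁ < Th a := by
    by_contra h
    push_neg at h
    have spec := Th_spec hamem.1 hamem.2
    have hmem' : Th a ∈ Icc (1/600:ℝ) (T₀ - ε₁) := ⟨spec.1.1.le, h⟩
    have := hapos (Th a) hmem'
    rw [spec.2.1] at this
    exact lt_irrefl 0 this
  -- u_a(s') < 0
  have hs'0 : (0:ℝ) ≤ s' := by linarith [hs'mem.1, hT₀mem.1]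
  have has' : (pa a s').1 < 0 := by
    have h2 := le_trans (fst_dist_le _ _)
      (hclose s' ⟨hs'0, by linarith [hs'mem.2, hT₀400]⟩)
    have h3 : min (min m κ) (ε/2) ≤ κ := le_trans (min_le_left _ _) (min_le_right _ _)
    rw [abs_le] at h2
    have h4 : (pa a₀ s').1 = -κ := by rw [hκ]; ring
    linarith [h2.2]
  -- IVT: a zero of u_a in [1/600, s']
  have h600s' : (1/600 : ℝ) ≤ s' := by linarith [hs'mem.1, hT₀mem.1]
  have hwina := (window hamem.1 hamem.2 (1/600) ⟨by norm_num, le_refl _⟩).2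
  have hupos600 : 0 < (pa a (1/600)).1 := by linarith [hwina]
  have hcua : Continuous fun s => (pa a s).1 := continuous_fst.comp (sol_cont _)
  obtain ⟨z, hz, hz0⟩ := intermediate_value_Icc' h600s' hcua.continuousOn
    (show (0:ℝ) ∈ Icc ((pa a s').1) ((pa a (1/600)).1) from ⟨has'.le, hupos600.le⟩)
  have hzmem : z ∈ hitSet a := ⟨⟨hz.1, by linarith [hz.2, hs'mem.2, hT₀400]⟩, hz0⟩
  have hThup : Th a ≤ z := csInf_le (hitSet_bdd a) hzmem
  have hThclose : |Th a - T₀| ≤ ε₁ := by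
    rw [abs_le]
    constructor
    · linarith [hThlow]
    · linarith [hThup, hz.2, hs'mem.2]
  -- final estimate
  have speca := Th_spec hamem.1 hamem.2
  have hTha0 : (0:ℝ) ≤ Th a := by linarith [speca.1.1]
  have hd1 : |(pa a (Th a)).2 - (pa a₀ (Th a)).2| ≤ min (min m κ) (ε/2) / 2 :=
    le_trans (snd_dist_le _ _) (hclose (Th a) ⟨hTha0, by linarith [speca.1.2]⟩)
  have hd2 : |(pa a₀ (Th a)).2 - (pa a₀ T₀).2| ≤ 150 * |Th a - T₀| := lip_y _ _ _
  rw [Real.dist_eq, hmap, hmap]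
  have hε₁' : ε₁ ≤ ε/400 := min_le_left _ _
  have hmin2 : min (min m κ) (ε/2) ≤ ε/2 := min_le_right _ _
  have hrw : -(pa a (Th a)).2 - -(pa a₀ (Th a₀)).2
      = -((pa a (Th a)).2 - (pa a₀ T₀).2) := by rw [← hT₀]; ring
  calc |-(pa a (Th a)).2 - -(pa a₀ (Th a₀)).2|
      = |(pa a (Th a)).2 - (pa a₀ T₀).2| := by rw [hrw, abs_neg]
  _ ≤ |(pa a (Th a)).2 - (pa a₀ (Th a)).2| + |(pa a₀ (Th a)).2 - (pa a₀ T₀).2| :=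
      abs_sub_le _ _ _
  _ ≤ ε/4 + 150 * ε₁ := by
      have h150 : 150 * |Th a - T₀| ≤ 150 * ε₁ :=
        mul_le_mul_of_nonneg_left hThclose (by norm_num)
      linarith [hd1, hd2, hmin2]
  _ < ε := by linarith [hε₁']



lemma exists_fixed : ∃ a ∈ Icc (1/2:ℝ) 2, hmap a = a := by
  have hg : ContinuousOn (fun a => hmap a - a) (Icc (1/2:ℝ) 2) :=
    hmap_cont.sub continuousOn_id
  have h1 : 0 ≤ hmap (1/2) - 1/2 := by
    have := (hmap_mem (le_refl _) (by norm_num)).1; linarith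
  have h2 : hmap 2 - 2 ≤ 0 := by
    have := (hmap_mem (by norm_num) (le_refl _)).2; linarith
  obtain ⟨a, hamem, h0⟩ := intermediate_value_Icc' (by norm_num : (1/2:ℝ) ≤ 2) hg
    (show (0:ℝ) ∈ Icc (hmap 2 - 2) (hmap (1/2) - 1/2) from ⟨h2, h1⟩)
  have h0' : hmap a - a = 0 := h0
  exact ⟨a, hamem, by linarith⟩

theorem periodic_exists :
    ∃ (u₀ : ℝ → ℝ) (τ₀ : ℝ), 0 < τ₀ ∧ ContDiff ℝ 2 u₀ ∧
      (∀ t : ℝ, deriv (deriv u₀) t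
          + ((u₀ t) ^ 2 + (u₀ t + deriv u₀ t) ^ 2 - 1) * deriv u₀ t + u₀ t = 0) ∧
      (∀ t : ℝ, u₀ (t + τ₀) = u₀ t) ∧
      (∃ t₁ t₂ : ℝ, u₀ t₁ ≠ u₀ t₂) := by
  obtain ⟨a, ha, hfix⟩ := exists_fixed
  obtain ⟨hTmem, huT, hy1, hy2, hupos⟩ := Th_spec ha.1 ha.2
  have hTpos : 0 < Th a := lt_trans (by norm_num) hTmem.1
  have hpT' : pa a (Th a) = ((0:ℝ), -a) := by
    have h2 : (pa a (Th a)).2 = -a := by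
      have h3 := hfix
      rw [hmap] at h3
      linarith
    exact Prod.ext_iff.mpr ⟨huT, h2⟩
  have hp' : ∀ t, HasDerivAt (pa a) (Wf (pa a t)) t := fun t => sol_deriv _ t
  -- the reflected-translated solution
  have hq : ∀ t, HasDerivAt (fun s => -(pa a (s - Th a)))
      (Wf (-(pa a (t - Th a)))) t := by
    intro t
    have h3 : HasDerivAt (fun s : ℝ => s - Th a) 1 t := (hasDerivAt_id t).sub_const _
    have h2 := (sol_deriv ((0:ℝ),a) (t - Th a)).scomp t h3
    have h1 : HasDerivAt (fun s => pa a (s - Th a)) (Wf (pa a (t - Th a))) t := by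
      rw [one_smul] at h2; exact h2
    rw [Wf_odd]
    exact h1.neg
  have hsym : ∀ t, pa a t = -(pa a (t - Th a)) := by
    have h0 : pa a (Th a) = -(pa a (Th a - Th a)) := by
      rw [sub_self, pa_0, hpT']
      simp
    exact sol_unique lipWf hp' hq h0
  have hperiod : ∀ t, pa a (t + 2*(Th a)) = pa a t := by
    intro t
    have h1 := hsym (t + 2*(Th a))
    have h2 := hsym (t + Th a)
    rw [show t + 2*(Th a) - Th a = t + Th a by ring] at h1
    rw [show t + Th a - Th a = t by ring] at h2
    rw [h1, h2, neg_neg]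
  have hper_n : ∀ (n : ℕ) (t : ℝ), pa a (t + n * (2*(Th a))) = pa a t := by
    intro n
    induction n with
    | zero => intro t; simp
    | succ k ih =>
        intro t
        have h4 : t + ((k:ℕ)+1 : ℕ) * (2*(Th a)) = (t + k * (2*(Th a))) + 2*(Th a) := by
          push_cast; ring
        rw [h4, hperiod, ih]
  have hbox : ∀ t, |(pa a t).1| ≤ 2 ∧ |(pa a t).2| ≤ 2 := by
    intro t
    have h2T : 0 < 2*(Th a) := by linarith
    set n := ⌈(-t) / (2*(Th a))⌉₊ with hn
    have h1 : (-t)/(2*(Th a)) ≤ (n:ℝ) := Nat.le_ceil _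
    have h5 := (div_le_iff₀ h2T).mp h1
    have hnonneg : 0 ≤ t + n * (2*(Th a)) := by linarith
    have := coord_bounds ha.1 ha.2 hnonneg
    rw [hper_n n t] at this
    exact this
  have hWf : ∀ t, Wf (pa a t) = Vf (pa a t) := fun t =>
    Wf_eq_Vf ((hbox t).1.trans (by norm_num)) ((hbox t).2.trans (by norm_num))
  have hdu : ∀ t, HasDerivAt (fun s => (pa a s).1) ((pa a t).2) t := by
    intro t
    have h1 := hasDeriv_u a t
    rw [hWf t] at h1
    exact h1
  have hdy : ∀ t, HasDerivAt (fun s => (pa a s).2)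
      (-(pa a t).1 - Ff (pa a t) * (pa a t).2) t := by
    intro t
    have h1 := hasDeriv_y a t
    rw [hWf t] at h1
    exact h1
  have hder : deriv (fun s => (pa a s).1) = fun s => (pa a s).2 :=
    funext fun s => (hdu s).deriv
  have hcont_p : Continuous (pa a) := sol_cont _
  have hc1 : Continuous fun s => (pa a s).1 := continuous_fst.comp hcont_p
  have hc2 : Continuous fun s => (pa a s).2 := continuous_snd.comp hcont_p
  refine ⟨fun t => (pa a t).1, 2*(Th a), by linarith, ?_, ?_, ?_, ?_⟩
  · -- smoothness
    have h21 : (2 : WithTop ℕ∞) = 1 + 1 := by norm_num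
    rw [h21, contDiff_succ_iff_deriv]
    refine ⟨fun t => (hdu t).differentiableAt, by simp, ?_⟩
    rw [hder, contDiff_one_iff_deriv]
    refine ⟨fun t => (hdy t).differentiableAt, ?_⟩
    have hder2 : deriv (fun s => (pa a s).2)
        = fun s => -(pa a s).1 - Ff (pa a s) * (pa a s).2 :=
      funext fun s => (hdy s).deriv
    rw [hder2]
    have : Continuous fun s => -(pa a s).1 -
        ((pa a s).1^2 + ((pa a s).1 + (pa a s).2)^2 - 1) * (pa a s).2 := by
      apply Continuous.sub hc1.neg
      apply Continuous.mul _ hc2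
      exact (((hc1.pow 2).add ((hc1.add hc2).pow 2)).sub continuous_const)
    simpa [Ff] using this
  · -- the differential equation
    intro t
    simp only [hder]
    rw [(hdy t).deriv]
    simp only [Ff]
    ring
  · -- periodicity
    intro t
    exact congrArg Prod.fst (hperiod t)
  · -- non-constancy
    refine ⟨1/600, 0, ?_⟩
    have hw := (window ha.1 ha.2 (1/600) ⟨by norm_num, le_refl _⟩).2
    have h0 : (pa a 0).1 = 0 := by rw [pa_0]
    intro h
    have h' : (pa a (1/600)).1 = (pa a 0).1 := h
    rw [h0] at h'
    rw [h'] at hw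
    norm_num at hw


end LS
namespace LS

lemma cube_pos : (0:ℝ) < (60 : ℝ) ^ ((1 : ℝ) / 3) :=
  Real.rpow_pos_of_pos (by norm_num) _

lemma cube_cubed : ((60 : ℝ) ^ ((1 : ℝ) / 3)) ^ (3:ℕ) = 60 := by
  rw [← Real.rpow_natCast ((60 : ℝ) ^ ((1 : ℝ) / 3)) 3, ← Real.rpow_mul (by norm_num)]
  norm_num

end LS

open Set Filter MeasureTheory intervalIntegral in
theorem levinson_verify :
    (∀ x : ℝ, x ≠ 0 → 0 < x * (fun x : ℝ => x) x) ∧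
    Tendsto (fun x : ℝ => ∫ s in (0:ℝ)..x, (fun x : ℝ => x) s) atTop atTop ∧
    (fun (x : ℝ) (y : ℝ) => x ^ 2 + (x + y) ^ 2 - 1) 0 0 < 0 ∧
    0 < (1:ℝ) ∧ (1:ℝ) < 1 + (60 : ℝ) ^ ((1 : ℝ) / 3) ∧ 0 < (1:ℝ) ∧
    (∀ x y : ℝ, (1:ℝ) ≤ |x| → 0 ≤ (fun (x : ℝ) (y : ℝ) => x ^ 2 + (x + y) ^ 2 - 1) x y) ∧
    (∀ x y : ℝ, |x| ≤ (1:ℝ) → -(1:ℝ) ≤ (fun (x : ℝ) (y : ℝ) => x ^ 2 + (x + y) ^ 2 - 1) x y) ∧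
    (∀ y : ℝ → ℝ, StrictAntiOn y (Set.Icc (1:ℝ) (1 + (60 : ℝ) ^ ((1 : ℝ) / 3))) →
      (∀ x ∈ Set.Icc (1:ℝ) (1 + (60 : ℝ) ^ ((1 : ℝ) / 3)), 0 < y x) →
      10 * 1 * 1 ≤ ∫ x in (1:ℝ)..(1 + (60 : ℝ) ^ ((1 : ℝ) / 3)),
        (fun (x : ℝ) (y : ℝ) => x ^ 2 + (x + y) ^ 2 - 1) x (y x)) := by
  set c : ℝ := (60 : ℝ) ^ ((1 : ℝ) / 3) with hc
  have hc0 : 0 < c := LS.cube_pos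
  have hc3 : c ^ (3:ℕ) = 60 := LS.cube_cubed
  refine ⟨?_, ?_, by norm_num, by norm_num, by linarith, by norm_num, ?_, ?_, ?_⟩
  · intro x hx
    exact mul_self_pos.mpr hx
  · have h1 : (fun x : ℝ => ∫ s in (0:ℝ)..x, s) = fun x : ℝ => (x^2 - 0^2)/2 := by
      funext x; rw [integral_id]
    rw [h1]
    simp only [ne_eq, OfNat.ofNat_ne_zero, not_false_eq_true, zero_pow, sub_zero]
    exact (tendsto_pow_atTop (by norm_num : (2:ℕ) ≠ 0)).atTop_div_const (by norm_num)
  · intro x y hx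
    simp only
    nlinarith [sq_abs x, sq_nonneg (x + y), abs_nonneg x]
  · intro x y _
    simp only
    nlinarith [sq_nonneg x, sq_nonneg (x + y)]
  · intro y hanti hypos
    have hx1 : (1:ℝ) ≤ 1 + c := by linarith
    have huIcc : uIcc (1:ℝ) (1 + c) = Icc (1:ℝ) (1 + c) := uIcc_of_le hx1
    -- integrability of the integrand
    have hyint : IntervalIntegrable y volume 1 (1 + c) := by
      apply AntitoneOn.intervalIntegrable
      rw [huIcc]
      exact hanti.antitoneOn
    have hy2int : IntervalIntegrable (fun x => (y x)^2) volume 1 (1 + c) := by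
      apply AntitoneOn.intervalIntegrable
      rw [huIcc]
      intro s hs t ht hst
      have h1 : y t ≤ y s := hanti.antitoneOn hs ht hst
      have h2 : 0 < y t := hypos t ht
      show (y t)^2 ≤ (y s)^2
      nlinarith
    have hxyint : IntervalIntegrable (fun x => x * y x) volume 1 (1 + c) :=
      hyint.continuousOn_mul continuousOn_id
    have hpolyint : IntervalIntegrable (fun x : ℝ => 2*x^2 - 1) volume 1 (1 + c) :=
      (Continuous.intervalIntegrable (by continuity) _ _)
    have hgint : IntervalIntegrable
        (fun x => x ^ 2 + (x + y x) ^ 2 - 1) volume 1 (1 + c) := by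
      have hrw : (fun x => x ^ 2 + (x + y x) ^ 2 - 1)
          = fun x => ((2*x^2 - 1) + 2 * (x * y x)) + (y x)^2 := by
        funext x; ring
      rw [hrw]
      exact ((hpolyint.add (hxyint.const_mul 2)).add hy2int)
    -- pointwise lower bound 2x² - 1
    have hmono := intervalIntegral.integral_mono_on hx1 hpolyint hgint
      (fun x hx => by
        have h1 : 0 < y x := hypos x hx
        have h2 : (1:ℝ) ≤ x := hx.1
        nlinarith)
    -- compute the lower integral
    have hcompute : ∫ x in (1:ℝ)..(1 + c), (2*x^2 - 1) = c + 2*c^2 + (2/3)*c^3 := by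
      have h1 : (fun x : ℝ => 2*x^2 - 1) = fun x : ℝ => 2*x^2 - 1 := rfl
      rw [intervalIntegral.integral_sub ((Continuous.intervalIntegrable (by continuity) _ _))
        (intervalIntegrable_const)]
      rw [intervalIntegral.integral_const_mul, integral_pow, intervalIntegral.integral_const]
      norm_num
      ring
    rw [show (10:ℝ) * 1 * 1 = 10 by norm_num]
    calc (10:ℝ) ≤ c + 2*c^2 + (2/3)*c^3 := by
          have : c^(3:ℕ) = c^3 := rfl
          nlinarith [hc0, sq_nonneg c]
    _ = ∫ x in (1:ℝ)..(1 + c), (2*x^2 - 1) := hcompute.symm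
    _ ≤ _ := hmono

/-- The equation `u'' + [u² + (u + u')² − 1]u' + u = 0` has at least one non-constant
periodic solution; indeed `φ(x,y) = x² + (x+y)² − 1` and `ψ(x) = x` satisfy the
Levinson–Smith conditions `C_LS` with `x₀ = 1`, `M = 1` and `x₁ = 1 + 60^{1/3}`. -/
theorem exists_periodic_solution_special_lienard :
    (∃ (u₀ : ℝ → ℝ) (τ₀ : ℝ), 0 < τ₀ ∧ ContDiff ℝ 2 u₀ ∧
      (∀ t : ℝ, deriv (deriv u₀) t
          + ((u₀ t) ^ 2 + (u₀ t + deriv u₀ t) ^ 2 - 1) * deriv u₀ t + u₀ t = 0) ∧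
      (∀ t : ℝ, u₀ (t + τ₀) = u₀ t) ∧
      (∃ t₁ t₂ : ℝ, u₀ t₁ ≠ u₀ t₂)) ∧
    LevinsonSmithWith (fun x y => x ^ 2 + (x + y) ^ 2 - 1) (fun x => x)
      1 (1 + (60 : ℝ) ^ ((1 : ℝ) / 3)) 1 := by
  exact ⟨LS.periodic_exists, levinson_verify⟩
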